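/- Let r > s be positive integers and let P_{n_1},…,P_{n_r} be paths with 2 ≤ n_1 ≤ n_2 ≤ … ≤ n_r. Then R_{r,s}(P_{n_1},…,P_{n_r}) ≥ ⌊(n_1 − 1)/2⌋ · ⌊r/s⌋ + 1. -/

import Mathlib

open SimpleGraph Finset

/-- `K_N` (with vertices `Fin N`) colored by `χ` contains a copy of `H` all of
whose edges' color sets contain the color element `i`. -/
def MonoCopy {W : Type} (H : SimpleGraph W) {N r : ℕ}
    (χ : Sym2 (Fin N) → Finset (Fin r)) (i : Fin r) : Prop :=
  ∃ f : W → Fin N, Function.Injective f ∧ ∀ u v, H.Adj u v → i ∈ χ s(f u, f v)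

/-- Every `(r,s)`-coloring of the edges of `K_N` (each edge gets an `s`-element
subset of `Fin r`) yields, for some `i`, a copy of `G i` monochromatic with
color element `i`. -/
def SetRamseyProp {r : ℕ} (s : ℕ) {V : Fin r → Type} (G : ∀ i, SimpleGraph (V i))
    (N : ℕ) : Prop :=
  ∀ χ : Sym2 (Fin N) → Finset (Fin r),
    (∀ e : Sym2 (Fin N), ¬ e.IsDiag → (χ e).card = s) →
    ∃ i, MonoCopy (G i) χ i

/-- The set-coloring Ramsey number `R_{r,s}(G₁,…,G_r)`. -/
noncomputable def setRamsey {r : ℕ} (s : ℕ) {V : Fin r → Type}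
    (G : ∀ i, SimpleGraph (V i)) : ℕ :=
  sInf {N | SetRamseyProp s G N}

def nbrs {N r : ℕ} (χ : Sym2 (Fin N) → Finset (Fin r)) (i : Fin r) (v : Fin N) :
    Finset (Fin N) :=
  Finset.univ.filter fun u => u < v ∧ i ∈ χ s(u, v)

def chainLen {N r : ℕ} (χ : Sym2 (Fin N) → Finset (Fin r)) (i : Fin r) (v : Fin N) : ℕ :=
  1 + (nbrs χ i v).attach.sup fun u => chainLen χ i u.1
termination_by v.val
decreasing_by
  exact (Finset.mem_filter.mp u.2).2.1

lemma chainLen_pos {N r : ℕ} (χ : Sym2 (Fin N) → Finset (Fin r)) (i : Fin r) (v : Fin N) :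
    1 ≤ chainLen χ i v := by
  rw [chainLen]; omega

lemma chainLen_chain {N r : ℕ} (χ : Sym2 (Fin N) → Finset (Fin r)) (i : Fin r) :
    ∀ m : ℕ, ∀ v : Fin N, v.val < m →
    ∃ f : Fin (chainLen χ i v) → Fin N, StrictAnti f ∧
      f ⟨0, chainLen_pos χ i v⟩ = v ∧
      ∀ (k : ℕ) (h : k + 1 < chainLen χ i v),
        i ∈ χ s(f ⟨k + 1, h⟩, f ⟨k, Nat.lt_of_succ_lt h⟩) := by
  intro m
  induction m with
  | zero => intro v hv; omega
  | succ m ih =>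
    intro v hv
    rcases Finset.eq_empty_or_nonempty (nbrs χ i v) with hemp | hne
    · have hc : chainLen χ i v = 1 := by rw [chainLen, hemp]; simp
      refine ⟨fun _ => v, ?_, rfl, ?_⟩
      · intro a b hab
        exact absurd (by omega : a.val < 1) (by have := hab; omega)
      · intro k h; omega
    · obtain ⟨u0, hu0mem, hsup⟩ := Finset.exists_mem_eq_sup ((nbrs χ i v).attach)
        (Finset.attach_nonempty_iff.mpr hne) (fun u => chainLen χ i u.1)
      have hu0 : u0.1 ∈ nbrs χ i v := u0.2
      simp only [nbrs, Finset.mem_filter] at hu0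
      obtain ⟨-, hu0lt, hu0col⟩ := hu0
      have hc : chainLen χ i v = chainLen χ i u0.1 + 1 := by
        rw [chainLen, ← hsup]; omega
      obtain ⟨g, hg1, hg2, hg3⟩ := ih u0.1 (by omega)
      refine ⟨fun k => if h : k.val = 0 then v
          else g ⟨k.val - 1, by have := k.isLt; omega⟩, ?_, by simp, ?_⟩
      · intro a b hab
        have hab' : a.val < b.val := hab
        by_cases ha : a.val = 0
        · have hb : ¬ b.val = 0 := by omega
          simp only [ha, hb, dif_pos, dif_neg, not_false_iff]
          calc g ⟨b.val - 1, _⟩ ≤ g ⟨0, chainLen_pos χ i u0.1⟩ := by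
                apply hg1.antitone; exact Fin.mk_le_mk.mpr (Nat.zero_le _)
          _ = u0.1 := hg2
          _ < v := hu0lt
        · have hb : ¬ b.val = 0 := by omega
          simp only [ha, hb, dif_neg, not_false_iff]
          exact hg1 (show (⟨a.val - 1, _⟩ : Fin _) < ⟨b.val - 1, _⟩ from by
            rw [Fin.mk_lt_mk]; omega)
      · intro k h
        by_cases hk : k = 0
        · subst hk
          simp only [dif_pos, dif_neg, Nat.one_ne_zero, not_false_iff]
          have : g ⟨0, chainLen_pos χ i u0.1⟩ = u0.1 := hg2
          simp only [this]
          exact hu0col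
        · obtain ⟨k', rfl⟩ : ∃ k', k = k' + 1 := ⟨k - 1, by omega⟩
          have hk0 : ¬ (k' + 1 + 1 = 0) := by omega
          have hk0' : ¬ (k' + 1 = 0) := by omega
          simp only [dif_neg hk0, dif_neg hk0', Nat.add_sub_cancel]
          exact hg3 k' (by omega)

lemma chainLen_lt {N r : ℕ} (χ : Sym2 (Fin N) → Finset (Fin r)) (i : Fin r) {u v : Fin N}
    (h : u < v) (hc : i ∈ χ s(u, v)) : chainLen χ i u < chainLen χ i v := by
  conv_rhs => rw [chainLen]
  have hm : u ∈ nbrs χ i v := by simp [nbrs, h, hc]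
  have := Finset.le_sup (f := fun w : {x // x ∈ nbrs χ i v} => chainLen χ i w.1)
    (Finset.mem_attach _ ⟨u, hm⟩)
  dsimp only at this
  omega

lemma setRamseyProp_paths (r s : ℕ) (hs : 0 < s) (n : Fin r → ℕ) (hn : ∀ i, 2 ≤ n i) :
    SetRamseyProp s (fun i => pathGraph (n i)) (∏ i, (n i - 1) + 1) := by
  set N := ∏ i, (n i - 1) + 1 with hN
  intro χ hcard
  by_contra hno
  push_neg at hno
  -- every chain is short
  have hshort : ∀ (i : Fin r) (v : Fin N), chainLen χ i v < n i := by
    intro i v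
    by_contra hlong
    push_neg at hlong
    obtain ⟨f, hf1, hf2, hf3⟩ := chainLen_chain χ i N v v.isLt
    refine hno i ⟨fun k => f ⟨k.val, lt_of_lt_of_le k.isLt hlong⟩, ?_, ?_⟩
    · intro a b hab
      have := hf1.injective hab
      exact Fin.ext (by simpa [Fin.mk.injEq] using this)
    · intro u v huv
      rw [pathGraph_adj] at huv
      show i ∈ χ s(f ⟨u.val, _⟩, f ⟨v.val, _⟩)
      rcases huv with h1 | h1
      · have e1 : (⟨v.val, lt_of_lt_of_le v.isLt hlong⟩ : Fin (chainLen χ i _)) =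
            ⟨u.val + 1, by omega⟩ := by rw [Fin.mk.injEq]; omega
        rw [e1, Sym2.eq_swap]
        exact hf3 u.val (by omega)
      · have e1 : (⟨u.val, lt_of_lt_of_le u.isLt hlong⟩ : Fin (chainLen χ i _)) =
            ⟨v.val + 1, by omega⟩ := by rw [Fin.mk.injEq]; omega
        rw [e1]
        exact hf3 v.val (by omega)
  -- injective map into a small product
  have hinj : Function.Injective (fun (v : Fin N) (i : Fin r) =>
      (⟨chainLen χ i v - 1, by
        have h1 := chainLen_pos χ i v
        have h2 := hshort i v
        have h3 := hn i
        omega⟩ : Fin (n i - 1))) := by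
    intro u v huv
    by_contra hne
    have hdiag : ¬ (s(u, v) : Sym2 (Fin N)).IsDiag := by simp [hne]
    have hcd := hcard s(u, v) hdiag
    have hne' : (χ s(u, v)).Nonempty := by
      rw [← Finset.card_pos, hcd]; exact hs
    obtain ⟨i, hi⟩ := hne'
    have hlt : chainLen χ i u ≠ chainLen χ i v := by
      rcases lt_trichotomy u v with h | h | h
      · exact (chainLen_lt χ i h hi).ne
      · exact absurd h hne
      · exact (chainLen_lt χ i h (by rwa [Sym2.eq_swap])).ne'
    have := congrFun huv i
    rw [Fin.mk.injEq] at this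
    have h1 := chainLen_pos χ i u
    have h2 := chainLen_pos χ i v
    omega
  have hcardle := Fintype.card_le_of_injective _ hinj
  simp only [Fintype.card_fin, Fintype.card_pi] at hcardle
  omega

lemma no_setRamseyProp_small (r s : ℕ) (hs : 0 < s) (hrs : s < r)
    (n : Fin r → ℕ) (hn : ∀ i, 2 ≤ n i) (hmono : Monotone n) (N : ℕ)
    (hNle : N ≤ (n ⟨0, Nat.lt_of_le_of_lt (Nat.zero_le s) hrs⟩ - 1) / 2 * (r / s)) :
    ¬ SetRamseyProp s (fun i => pathGraph (n i)) N := by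
  set i0 : Fin r := ⟨0, Nat.lt_of_le_of_lt (Nat.zero_le s) hrs⟩ with hi0
  set q : ℕ := (n i0 - 1) / 2 with hq
  set t : ℕ := r / s with htdef
  have ht : 0 < t := Nat.div_pos (le_of_lt hrs) hs
  haveI : NeZero t := ⟨ht.ne'⟩
  have hts : t * s ≤ r := by
    rw [htdef]; exact Nat.div_mul_le_self r s
  rcases Nat.eq_zero_or_pos q with hq0 | hqpos
  · -- q = 0 → N = 0
    have hqt : q * t = 0 := by rw [hq0, Nat.zero_mul]
    have hN0 : N = 0 := by omega
    subst hN0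
    intro hprop
    obtain ⟨i, f, -, -⟩ := hprop (fun _ => ∅) (by
      intro e he
      exfalso
      induction e using Sym2.ind with
      | _ a b => exact a.elim0)
    exact (f ⟨0, by have := hn i; omega⟩).elim0
  -- main case
  intro hprop
  -- block of a vertex
  set blk : Fin N → ZMod t := fun v => ((v.val / q : ℕ) : ZMod t) with hblk
  -- group of colors
  have hgrp_bound : ∀ (j : ZMod t) (k : Fin s), j.val * s + k.val < r := by
    intro j k
    calc j.val * s + k.val < j.val * s + s := Nat.add_lt_add_left k.isLt _
    _ = (j.val + 1) * s := (Nat.succ_mul _ _).symm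
    _ ≤ t * s := Nat.mul_le_mul_right s (ZMod.val_lt j)
    _ ≤ r := hts
  set grp : ZMod t → Finset (Fin r) :=
    fun j => Finset.univ.image (fun k : Fin s => (⟨j.val * s + k.val, hgrp_bound j k⟩ : Fin r))
    with hgrpdef
  have hgrp_card : ∀ j, (grp j).card = s := by
    intro j
    rw [hgrpdef]
    rw [Finset.card_image_of_injective _ (fun a b hab => by
      rw [Fin.mk.injEq] at hab
      exact Fin.ext (by omega))]
    simp
  have hgrp_mem : ∀ (i : Fin r) (j : ZMod t), i ∈ grp j → ∃ k : ℕ, k < s ∧ i.val = j.val * s + k := by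
    intro i j hij
    rw [hgrpdef] at hij
    simp only [Finset.mem_image, Finset.mem_univ, true_and] at hij
    obtain ⟨k, hk⟩ := hij
    exact ⟨k.val, k.isLt, by rw [← hk]⟩
  have hgrp_uniq : ∀ (i : Fin r) (j j' : ZMod t), i ∈ grp j → i ∈ grp j' → j = j' := by
    intro i j j' hj hj'
    obtain ⟨k, hk, hik⟩ := hgrp_mem i j hj
    obtain ⟨k', hk', hik'⟩ := hgrp_mem i j' hj'
    have hv : j.val = j'.val := by
      have e1 : (j.val * s + k) / s = j.val := by
        rw [Nat.mul_comm, Nat.mul_add_div hs, Nat.div_eq_of_lt hk, Nat.add_zero]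
      have e2 : (j'.val * s + k') / s = j'.val := by
        rw [Nat.mul_comm, Nat.mul_add_div hs, Nat.div_eq_of_lt hk', Nat.add_zero]
      rw [← e1, ← e2, ← hik, ← hik']
    exact ZMod.val_injective t hv
  -- the coloring
  set χ : Sym2 (Fin N) → Finset (Fin r) :=
    Sym2.lift ⟨fun u v => grp (blk u + blk v), fun u v => by
      show grp (blk u + blk v) = grp (blk v + blk u)
      rw [add_comm]⟩ with hχ
  have hχmk : ∀ u v : Fin N, χ s(u, v) = grp (blk u + blk v) := fun u v => rfl
  obtain ⟨i, f, hfinj, hfadj⟩ := hprop χ (by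
    intro e he
    induction e using Sym2.ind with
    | _ a b => rw [hχmk]; exact hgrp_card _)
  have h2i : 2 ≤ n i := hn i
  -- edges of the path
  have hedge : ∀ (k : ℕ) (h : k + 1 < n i),
      i ∈ grp (blk (f ⟨k, Nat.lt_of_succ_lt h⟩) + blk (f ⟨k + 1, h⟩)) := by
    intro k h
    have := hfadj ⟨k, Nat.lt_of_succ_lt h⟩ ⟨k + 1, h⟩ (by rw [pathGraph_adj]; left; rfl)
    rwa [hχmk] at this
  set j0 : ZMod t := blk (f ⟨0, by omega⟩) + blk (f ⟨1, by omega⟩) with hj0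
  have hsum : ∀ (k : ℕ) (h : k + 1 < n i),
      blk (f ⟨k, Nat.lt_of_succ_lt h⟩) + blk (f ⟨k + 1, h⟩) = j0 := by
    intro k h
    exact hgrp_uniq i _ _ (hedge k h) (hedge 0 (by omega))
  have hstep : ∀ (k : ℕ) (h : k + 2 < n i),
      blk (f ⟨k + 2, h⟩) = blk (f ⟨k, by omega⟩) := by
    intro k h
    have h1 := hsum k (by omega)
    have h2 := hsum (k + 1) (by omega)
    have : blk (f ⟨k, by omega⟩) + blk (f ⟨k + 1, by omega⟩)
        = blk (f ⟨k + 2, h⟩) + blk (f ⟨k + 1, by omega⟩) := by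
      rw [add_comm (blk (f ⟨k + 2, h⟩))]
      rw [h1, ← h2]
    exact (add_right_cancel this).symm
  have heven : ∀ (l : ℕ) (h : 2 * l < n i), blk (f ⟨2 * l, h⟩) = blk (f ⟨0, by omega⟩) := by
    intro l
    induction l with
    | zero => intro h; rfl
    | succ l ih =>
      intro h
      have h2 : 2 * l + 2 < n i := by omega
      have e1 : (⟨2 * (l + 1), h⟩ : Fin (n i)) = ⟨2 * l + 2, h2⟩ := by
        rw [Fin.mk.injEq]; ring
      rw [e1, hstep (2 * l) h2]
      exact ih (by omega)
  -- counting
  set A : ℕ := (f ⟨0, by omega⟩).val / q with hA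
  have hdivlt : ∀ v : Fin N, v.val / q < t := by
    intro v
    rw [Nat.div_lt_iff_lt_mul hqpos]
    have := v.isLt
    calc v.val < N := this
    _ ≤ q * t := hNle
    _ = t * q := Nat.mul_comm _ _
  have hblk_val : ∀ v : Fin N, blk v = blk (f ⟨0, by omega⟩) → v.val / q = A := by
    intro v hv
    have h1 : (blk v).val = v.val / q := ZMod.val_cast_of_lt (hdivlt v)
    have h2 : (blk (f ⟨0, by omega⟩)).val = (f ⟨0, by omega⟩).val / q :=
      ZMod.val_cast_of_lt (hdivlt _)
    have h3 : (blk v).val = (blk (f ⟨0, by omega⟩)).val := congrArg ZMod.val hv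
    exact (h1.symm.trans h3).trans h2
  set B : Finset (Fin N) := Finset.univ.filter (fun v => v.val / q = A) with hB
  have hBcard : B.card ≤ q := by
    have himg : B.image Fin.val ⊆ (Finset.range q).image (fun x => q * A + x) := by
      intro w hw
      rw [Finset.mem_image] at hw
      obtain ⟨v, hv, rfl⟩ := hw
      rw [hB, Finset.mem_filter] at hv
      have hvA : v.val / q = A := hv.2
      refine Finset.mem_image.mpr ⟨v.val % q, Finset.mem_range.mpr (Nat.mod_lt _ hqpos), ?_⟩
      have hd := Nat.div_add_mod v.val q
      rw [hvA] at hd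
      exact hd
    calc B.card = (B.image Fin.val).card :=
          (Finset.card_image_of_injective _ Fin.val_injective).symm
    _ ≤ ((Finset.range q).image (fun x => q * A + x)).card := Finset.card_le_card himg
    _ ≤ (Finset.range q).card := Finset.card_image_le
    _ = q := Finset.card_range q
  have h2q : 2 * q ≤ n i0 - 1 := by rw [hq]; omega
  have hn0i : n i0 ≤ n i := hmono (by simp [hi0, Fin.le_def])
  have hlq : ∀ l : Fin (q + 1), 2 * l.val < n i := by
    intro l
    have := l.isLt
    have := hn i0
    omega
  have hq1 : q + 1 ≤ B.card := by
    have := Finset.card_le_card_of_injOn (f := fun l : Fin (q + 1) => f ⟨2 * l.val, hlq l⟩)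
      (s := Finset.univ) (t := B) (by
        intro l _
        rw [hB]
        simp only [Finset.mem_coe, Finset.mem_filter, Finset.mem_univ, true_and]
        exact hblk_val _ (heven l.val (hlq l)))
      (by
        intro a _ b _ hab
        have := hfinj hab
        rw [Fin.mk.injEq] at this
        exact Fin.ext (by omega))
    simpa using this
  omega

/-- `R_{r,s}(P_{n₁},…,P_{n_r}) ≥ ⌊(n₁ − 1)/2⌋·⌊r/s⌋ + 1` for `r > s ≥ 1` and
`2 ≤ n₁ ≤ … ≤ n_r`. -/
theorem setRamsey_paths_lower (r s : ℕ) (hs : 0 < s) (hrs : s < r)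
    (n : Fin r → ℕ) (hn : ∀ i, 2 ≤ n i) (hmono : Monotone n) :
    (n ⟨0, Nat.lt_of_le_of_lt (Nat.zero_le s) hrs⟩ - 1) / 2 * (r / s) + 1
      ≤ setRamsey s (fun i => pathGraph (n i)) := by
  have hne : {N | SetRamseyProp s (fun i => pathGraph (n i)) N}.Nonempty :=
    ⟨∏ i, (n i - 1) + 1, Set.mem_setOf_eq ▸ setRamseyProp_paths r s hs n hn⟩
  apply le_csInf hne
  intro N hN
  rw [Set.mem_setOf_eq] at hN
  by_contra h
  push_neg at h
  exact no_setRamseyProp_small r s hs hrs n hn hmono N (by omega) hN
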